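/- Let Z be a base ring, A a commutative Z-algebra, E an A-module with projective basis (e_i, x_i)_{i=1..n}, P^l the l-th module of principal parts with ∂^l(a) = class of 1⊗a, and ∇^l : E → P^l ⊗_A E defined by ∇^l(e) = Σ_i ∂^l(x_i(e)) ⊗ e_i. Then ∇^l is a differential operator of order ≤ l (i.e., all (l+1)-fold iterated commutators [···[∇^l, a_1]···, a_{l+1}] with multiplication operators vanish), and (p_l ⊗ id) ∘ ∇^l = ∇^{l−1}, where p_l : P^l → P^{l−1} is the canonical projection. -/

import Mathlib

set_option synthInstance.maxHeartbeats 1600000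

open scoped TensorProduct

noncomputable section

/-- The kernel `I` of the multiplication map `A ⊗[Z] A → A`. -/
def Iker (Z A : Type*) [CommRing Z] [CommRing A] [Algebra Z A] : Ideal (A ⊗[Z] A) :=
  RingHom.ker (Algebra.TensorProduct.lmul' Z (S := A)).toRingHom

/-- The `m`-th-stage quotient `(A ⊗[Z] A)/I^m`; `P^l = PpartQ Z A (l+1)`. -/
abbrev PpartQ (Z A : Type*) [CommRing Z] [CommRing A] [Algebra Z A] (m : ℕ) :=
  (A ⊗[Z] A) ⧸ (Iker Z A ^ m)

/-- `∂ : A → (A ⊗[Z] A)/I^m`, `a ↦ class of 1 ⊗ a`. -/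
def delQ (Z A : Type*) [CommRing Z] [CommRing A] [Algebra Z A] (m : ℕ) (a : A) :
    PpartQ Z A m :=
  Ideal.Quotient.mk _ ((1 : A) ⊗ₜ[Z] a)

/-- The `l`-connection associated to a projective basis:
`∇^l(e) = Σ_i ∂^l(x_i(e)) ⊗ e_i ∈ P^l ⊗[A] E`. -/
def nablaL (Z : Type*) {A E : Type*} [CommRing Z] [CommRing A] [Algebra Z A]
    [AddCommGroup E] [Module A E] (m : ℕ) {n : ℕ}
    (xb : Fin n → E →ₗ[A] A) (eb : Fin n → E) (e : E) :
    PpartQ Z A m ⊗[A] E :=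
  ∑ i, delQ Z A m (xb i e) ⊗ₜ[A] eb i

/-- The commutator `[D, a]` of a map `D : E → P^l ⊗[A] E` with the multiplication
operator of `a ∈ A`. -/
def brktE (Z : Type*) {A E : Type*} [CommRing Z] [CommRing A] [Algebra Z A]
    [AddCommGroup E] [Module A E] (m : ℕ)
    (a : A) (D : E → PpartQ Z A m ⊗[A] E) : E → PpartQ Z A m ⊗[A] E :=
  fun e => D (a • e) - a • D e

section Aux
variable {Z A E : Type*} [CommRing Z] [CommRing A] [Algebra Z A]
    [AddCommGroup E] [Module A E]

lemma dmem (a : A) : ((1:A) ⊗ₜ[Z] a - a ⊗ₜ[Z] (1:A)) ∈ Iker Z A := by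
  simp [Iker, RingHom.mem_ker, map_sub, Algebra.TensorProduct.lmul'_apply_tmul]

lemma smul_mk (m : ℕ) (a : A) (q : A ⊗[Z] A) :
    a • (Ideal.Quotient.mk (Iker Z A ^ m) q) =
      Ideal.Quotient.mk (Iker Z A ^ m) ((a ⊗ₜ[Z] (1:A)) * q) := by
  have h : (a ⊗ₜ[Z] (1:A)) * q = a • q := by rw [Algebra.smul_def]; rfl
  rw [h]
  rfl

lemma prod_mem_pow (as : List A) :
    ((as.map (fun a => (1:A) ⊗ₜ[Z] a - a ⊗ₜ[Z] (1:A))).prod) ∈ Iker Z A ^ as.length := by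
  induction as with
  | nil => simp
  | cons a as ih =>
    simp only [List.map_cons, List.prod_cons, List.length_cons]
    rw [pow_succ']
    exact Ideal.mul_mem_mul (dmem a) ih

lemma foldr_eq {n : ℕ} (xb : Fin n → E →ₗ[A] A) (eb : Fin n → E) (m : ℕ)
    (as : List A) (e : E) :
    (as.foldr (brktE Z m) (nablaL Z m xb eb)) e
      = ∑ i, (Ideal.Quotient.mk (Iker Z A ^ m)
          ((as.map (fun a => (1:A) ⊗ₜ[Z] a - a ⊗ₜ[Z] (1:A))).prod
            * ((1:A) ⊗ₜ[Z] (xb i e)))) ⊗ₜ[A] eb i := by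
  induction as generalizing e with
  | nil => simp [nablaL, delQ]
  | cons a as ih =>
    simp only [List.foldr_cons, brktE, ih, List.map_cons, List.prod_cons]
    rw [Finset.smul_sum, ← Finset.sum_sub_distrib]
    refine Finset.sum_congr rfl fun i _ => ?_
    rw [TensorProduct.smul_tmul', smul_mk, ← TensorProduct.sub_tmul]
    congr 1
    rw [← map_sub]
    congr 1
    have h1 : xb i (a • e) = a * xb i e := by rw [map_smul]; rfl
    rw [h1]
    have h2 : (1:A) ⊗ₜ[Z] (a * xb i e) = ((1:A) ⊗ₜ[Z] a) * ((1:A) ⊗ₜ[Z] (xb i e)) := by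
      rw [Algebra.TensorProduct.tmul_mul_tmul, one_mul]
    rw [h2]
    ring

end Aux

/-- `∇^l` is a differential operator of order `≤ l`, and `(p_l ⊗ id) ∘ ∇^l = ∇^{l-1}`
where `p_l : P^l → P^{l-1}` is the canonical projection. -/
theorem stmt_19 {Z A E : Type*} [CommRing Z] [CommRing A] [Algebra Z A]
    [AddCommGroup E] [Module A E] {n : ℕ}
    (eb : Fin n → E) (xb : Fin n → E →ₗ[A] A)
    (hbasis : ∀ v : E, ∑ i, xb i v • eb i = v)
    (l : ℕ) (hl : 1 ≤ l) :
    (∀ as : List A, as.length = l + 1 → ∀ e : E,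
        (as.foldr (brktE Z (l + 1)) (nablaL Z (l + 1) xb eb)) e = 0) ∧
    (∀ e : E,
        ∑ i, (Ideal.Quotient.factor (S := Iker Z A ^ (l + 1)) (T := Iker Z A ^ l)
                (Ideal.pow_le_pow_right (by omega))
                (delQ Z A (l + 1) (xb i e))) ⊗ₜ[A] eb i
          = nablaL Z l xb eb e) := by
  constructor
  · intro as hlen e
    rw [foldr_eq]
    refine Finset.sum_eq_zero fun i _ => ?_
    have hp := prod_mem_pow (Z := Z) as
    rw [hlen] at hp
    rw [Ideal.Quotient.eq_zero_iff_mem.mpr (Ideal.mul_mem_right _ _ hp),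
      TensorProduct.zero_tmul]
  · intro e
    unfold nablaL delQ
    refine Finset.sum_congr rfl fun i _ => ?_
    rw [Ideal.Quotient.factor_mk]
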